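/- Let (G,H) be an instance with s1t1 ∈ EH, let e = s1s1' be an edge of G, and let (G_e, H_e) be the instance obtained by the local move along e. If (G_e, H_e) is feasible, then (G,H) is feasible. -/

import Mathlib

/-!
We encode a multigraph on vertex type `V` with edge-index type `E` by a map
`G : E → V × V`: the edge with index `e` joins the (unordered) endpoints
`(G e).1` and `(G e).2`.
-/

/-- The degree of `v` in the multigraph `G`: the number of edge-ends of `G`
incident to `v` (a loop counts twice). -/
noncomputable def mdeg {V E : Type} (G : E → V × V) (v : V) : ℕ :=
  Set.ncard {p : E × Bool | (cond p.2 (G p.1).1 (G p.1).2) = v}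

/-- `mcut G U` is `d_G(U)`: the number of edges of `G` having exactly one
endpoint in `U`. -/
noncomputable def mcut {V E : Type} (G : E → V × V) (U : Set V) : ℕ :=
  Set.ncard {e : E | ((G e).1 ∈ U ∧ (G e).2 ∉ U) ∨ ((G e).2 ∈ U ∧ (G e).1 ∉ U)}

/-- Walks in the multigraph `G`; an edge may be traversed in either direction. -/
inductive MWalk {V E : Type} (G : E → V × V) : V → V → Type where
  | nil (v : V) : MWalk G v v
  | cons {u v w : V} (e : E) (he : G e = (u, v) ∨ G e = (v, u)) (tail : MWalk G v w) :
      MWalk G u w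

namespace MWalk
/-- The list of edges traversed by a walk. -/
def edges {V E : Type} {G : E → V × V} : {u v : V} → MWalk G u v → List E
  | _, _, nil _ => []
  | _, _, cons e _ p => e :: p.edges
end MWalk

/-- An instance `(G, H)` (`H` is the demand multigraph, on the same vertex set)
is feasible if the demand edges can be routed by pairwise edge-disjoint paths
of `G`: for each demand edge `i` there is a walk of `G` connecting its two
endpoints, the walks being pairwise edge-disjoint. -/
def MFeasible {V E E' : Type} (G : E → V × V) (H : E' → V × V) : Prop :=
  ∃ P : (i : E') → MWalk G (H i).1 (H i).2,
    ∀ i j : E', i ≠ j → List.Disjoint (P i).edges (P j).edges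

/-- The multigraph `G` is connected (all of its vertex set lies in one
connected component). -/
def MConnected {V E : Type} (G : E → V × V) : Prop :=
  ∀ u v : V, Nonempty (MWalk G u v)

/-- The subgraph `G[U]` induced by `U` is connected: any two vertices of `U`
are joined by a walk all of whose edges have both endpoints in `U`. -/
def MInducedConnected {V E : Type} (G : E → V × V) (U : Set V) : Prop :=
  ∀ u ∈ U, ∀ v ∈ U, ∃ p : MWalk G u v, ∀ e ∈ p.edges, (G e).1 ∈ U ∧ (G e).2 ∈ U

/-- The instance `(G, H)` is Eulerian: every vertex of `G + H` has even degree. -/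
def MEulerian {V E E' : Type} (G : E → V × V) (H : E' → V × V) : Prop :=
  ∀ v : V, Even (mdeg G v + mdeg H v)


namespace MWalk
/-- Change the endpoints of a walk along equalities. -/
def copy {V E : Type} {G : E → V × V} {a b a' b' : V}
    (w : MWalk G a b) (ha : a = a') (hb : b = b') : MWalk G a' b' :=
  ha ▸ hb ▸ w

theorem copy_edges {V E : Type} {G : E → V × V} {a b a' b' : V}
    (w : MWalk G a b) (ha : a = a') (hb : b = b') :
    (w.copy ha hb).edges = w.edges := by subst ha; subst hb; rfl
end MWalk

/-- Lift a walk in `G - e0` to a walk in `G`. -/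
def liftWalk {V E : Type} {G : E → V × V} {e0 : E} :
    {u v : V} → MWalk (fun e : {e : E // e ≠ e0} => G e.1) u v → MWalk G u v
  | _, _, .nil v => .nil v
  | _, _, .cons e he p => .cons e.1 he (liftWalk p)

theorem liftWalk_edges {V E : Type} {G : E → V × V} {e0 : E} :
    ∀ {u v : V} (p : MWalk (fun e : {e : E // e ≠ e0} => G e.1) u v),
      (liftWalk p).edges = p.edges.map Subtype.val
  | _, _, .nil _ => rfl
  | _, _, .cons e he p => by
      simp [liftWalk, MWalk.edges, liftWalk_edges p]

theorem disjoint_map_val {E : Type} {e0 : E} {l1 l2 : List {e : E // e ≠ e0}}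
    (h : List.Disjoint l1 l2) :
    List.Disjoint (l1.map Subtype.val) (l2.map Subtype.val) := by
  intro a ha hb
  simp only [List.mem_map] at ha hb
  obtain ⟨x, hx, rfl⟩ := ha
  obtain ⟨y, hy, hxy⟩ := hb
  exact h hx (Subtype.ext hxy.symm ▸ hy)

theorem e0_not_mem_map_val {E : Type} {e0 : E} {l : List {e : E // e ≠ e0}} :
    e0 ∉ l.map Subtype.val := by
  intro hmem
  simp only [List.mem_map] at hmem
  obtain ⟨x, _, hx⟩ := hmem
  exact x.2 hx

/-- If the instance `(G_e, H_e)` obtained by the local move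
along an edge `e = s₁s₁'` of `G` (delete `e` from `G`, replace the demand edge
`s₁t₁` by `s₁'t₁`) is feasible, then so is `(G, H)`. -/
theorem statement12 {V E E' : Type} [DecidableEq E']
    (G : E → V × V) (H : E' → V × V)
    (s1 t1 s1' : V) (i0 : E') (hi0 : H i0 = (s1, t1))
    (e0 : E) (he0 : G e0 = (s1, s1') ∨ G e0 = (s1', s1))
    (hfeas : MFeasible (fun e : {e : E // e ≠ e0} => G e.1)
      (Function.update H i0 (s1', t1))) :
    MFeasible G H := by
  classical
  obtain ⟨P, hP⟩ := hfeas
  have hup0 : Function.update H i0 (s1', t1) i0 = (s1', t1) :=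
    Function.update_self _ _ _
  have hup : ∀ i : E', i ≠ i0 → Function.update H i0 (s1', t1) i = H i :=
    fun i h => Function.update_of_ne h _ _
  set Q : (i : E') → MWalk G (H i).1 (H i).2 := fun i =>
    if h : i = i0 then
      ((MWalk.cons e0 he0
          (liftWalk ((P i0).copy (congrArg Prod.fst hup0) (congrArg Prod.snd hup0)))).copy
        (congrArg Prod.fst hi0).symm (congrArg Prod.snd hi0).symm).copy
        (congrArg (fun j => (H j).1) h.symm) (congrArg (fun j => (H j).2) h.symm)
    else
      liftWalk ((P i).copy (congrArg Prod.fst (hup i h)) (congrArg Prod.snd (hup i h)))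
    with hQ
  have hedge : ∀ i : E', (Q i).edges =
      if i = i0 then e0 :: (P i0).edges.map Subtype.val
      else (P i).edges.map Subtype.val := by
    intro i
    by_cases h : i = i0
    · simp [hQ, h, MWalk.copy_edges, MWalk.edges, liftWalk_edges]
    · simp [hQ, h, MWalk.copy_edges, liftWalk_edges]
  refine ⟨Q, ?_⟩
  intro i j hij
  rw [hedge i, hedge j]
  by_cases hi : i = i0 <;> by_cases hj : j = i0 <;> simp [hi, hj]
  · exact absurd (hi.trans hj.symm) hij
  · subst hi
    exact disjoint_map_val (hP i j hij)
  · subst hj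
    exact disjoint_map_val (hP i j hij)
  · exact disjoint_map_val (hP i j hij)
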